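/- Finite-case existence of robust Bayes act: Let X be finite, L bounded, and suppose the risk set S = {(L(x₁,ζ),…,L(x_N,ζ)) : ζ ∈ Z} ⊂ ℝ^N is closed, Z being a convex set of randomized acts with L(P,·) affine. Let Γ be a convex set of distributions on X. Then there exists ζ* ∈ Z achieving inf_{ζ∈Z} sup_{P∈Γ} L(P,ζ), and this value equals sup_{P∈Γ̄} inf_{ζ∈Z} L(P,ζ) where Γ̄ is the closure of Γ. -/

import Mathlib

open Finset in
/-- Separation lemma: if a nonempty convex set `T ⊆ ℝ^k` is disjoint from the open
orthant `{d | ∀ i, d i < m}`, then some convex combination of coordinates is ≥ m on T. -/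
lemma sep_lemma {k : Type*} [Fintype k] [Nonempty k] (T : Set (k → ℝ))
    (hT : Convex ℝ T) (hTne : T.Nonempty) (m : ℝ)
    (hdisj : ∀ d ∈ T, ∃ i, m ≤ d i) :
    ∃ q : k → ℝ, (∀ i, 0 ≤ q i) ∧ ∑ i, q i = 1 ∧ ∀ d ∈ T, m ≤ ∑ i, q i * d i := by
  classical
  set D : Set (k → ℝ) := {d | ∀ i, d i < m} with hD
  have hDopen : IsOpen D := by
    have : D = Set.pi Set.univ (fun _ : k => Set.Iio m) := by
      ext d; simp [hD, Set.mem_pi]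
    rw [this]
    exact isOpen_set_pi Set.finite_univ (fun _ _ => isOpen_Iio)
  have hDconv : Convex ℝ D := by
    have : D = Set.pi Set.univ (fun _ : k => Set.Iio m) := by
      ext d; simp [hD, Set.mem_pi]
    rw [this]
    exact convex_pi (fun _ _ => convex_Iio m)
  have hDne : D.Nonempty := ⟨fun _ => m - 1, fun i => by simp⟩
  have hdisj' : Disjoint D T := by
    rw [Set.disjoint_left]
    intro d hd hdT
    obtain ⟨i, hi⟩ := hdisj d hdT
    exact absurd (hd i) (not_lt.2 hi)
  obtain ⟨φ, c, hφD, hφT⟩ := geometric_hahn_banach_open hDconv hDopen hT hdisj'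
  set q₀ : k → ℝ := fun i => φ (Pi.single i 1) with hq₀
  have hrep : ∀ d : k → ℝ, φ d = ∑ i, d i * q₀ i := by
    intro d
    have hsingle : ∀ i : k, (fun j => if i = j then (1:ℝ) else 0) = Pi.single i 1 := by
      intro i; funext j; simp [Pi.single_apply, eq_comm]
    conv_lhs => rw [pi_eq_sum_univ d]
    rw [map_sum]
    refine Finset.sum_congr rfl fun i _ => ?_
    rw [hsingle i, map_smul, smul_eq_mul]
  -- q₀ is nonnegative
  have hq₀nonneg : ∀ i, 0 ≤ q₀ i := by
    intro i
    by_contra hneg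
    push_neg at hneg
    have hfd₀ : φ (fun _ => m - 1) < c := hφD _ (fun j => by show m - 1 < m; linarith)
    set t : ℝ := (c - φ (fun _ => m - 1) + 1) / (-q₀ i) with ht
    have htpos : 0 < t := div_pos (by linarith) (by linarith)
    have hmem : ((fun _ => m - 1) - t • (Pi.single i 1 : k → ℝ)) ∈ D := by
      intro j
      simp only [Pi.sub_apply, Pi.smul_apply, smul_eq_mul, Pi.single_apply]
      by_cases hji : j = i
      · simp only [hji, eq_self_iff_true, if_true, mul_one]; linarith
      · simp only [if_neg hji, mul_zero]; linarith
    have hlt := hφD _ hmem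
    rw [map_sub, map_smul, smul_eq_mul] at hlt
    have hne' : q₀ i ≠ 0 := ne_of_lt hneg
    have hcalc : φ (fun _ => m - 1) - t * q₀ i = c + 1 := by
      rw [ht, div_mul_eq_mul_div, mul_div_assoc, div_neg, div_self hne']; ring
    rw [hcalc] at hlt
    linarith
  set Q : ℝ := ∑ i, q₀ i with hQ
  have hQnonneg : 0 ≤ Q := Finset.sum_nonneg fun i _ => hq₀nonneg i
  have hQpos : 0 < Q := by
    rcases hQnonneg.lt_or_eq with h | h
    · exact h
    have hall : ∀ i ∈ Finset.univ, q₀ i = 0 :=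
      (Finset.sum_eq_zero_iff_of_nonneg (fun i _ => hq₀nonneg i)).1 h.symm
    obtain ⟨b, hb⟩ := hTne
    have h1 : φ (fun _ => m - 1) < c := hφD _ (fun i => by simp)
    have h2 : c ≤ φ b := hφT b hb
    have hz : ∀ d : k → ℝ, φ d = 0 := by
      intro d
      rw [hrep]
      exact Finset.sum_eq_zero fun i _ => by rw [hall i (Finset.mem_univ i), mul_zero]
    rw [hz] at h1 h2
    linarith
  refine ⟨fun i => q₀ i / Q, fun i => div_nonneg (hq₀nonneg i) hQnonneg, ?_, ?_⟩
  · rw [← Finset.sum_div, ← hQ, div_self hQpos.ne']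
  · intro d hd
    have hc : c ≤ ∑ i, d i * q₀ i := by rw [← hrep]; exact hφT d hd
    -- (m - ε) * Q < c for all ε > 0
    have key : ∀ ε : ℝ, 0 < ε → (m - ε) * Q ≤ c := by
      intro ε hε
      have hmem : (fun _ : k => m - ε) ∈ D := fun i => by simp [hε]
      have := hφD _ hmem
      rw [hrep] at this
      have : (∑ i, (m - ε) * q₀ i) < c := this
      rw [← Finset.mul_sum] at this
      exact this.le
    have hmQ : m * Q ≤ c := by
      by_contra hcon
      push_neg at hcon
      have hε : 0 < (m * Q - c) / (2 * Q) := div_pos (by linarith) (by linarith)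
      have := key _ hε
      have hexp : (m - (m * Q - c) / (2 * Q)) * Q = m * Q - (m * Q - c) / 2 := by
        field_simp
      rw [hexp] at this
      linarith
    have hfin : m * Q ≤ ∑ i, d i * q₀ i := le_trans hmQ hc
    have heq : ∑ i, (q₀ i / Q) * d i = (∑ i, d i * q₀ i) / Q := by
      rw [Finset.sum_div]
      exact Finset.sum_congr rfl fun i _ => by ring
    rw [heq, le_div_iff₀ hQpos]
    linarith


open Finset in
lemma core_lemma {N : ℕ} (S Γ' : Set (Fin N → ℝ))
    (hScomp : IsCompact S) (hSconv : Convex ℝ S) (hSne : S.Nonempty)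
    (hΓconv : Convex ℝ Γ')
    (α : ℝ)
    (hα : ∀ p ∈ Γ', ∀ ε : ℝ, 0 < ε → ∃ f ∈ S, ∑ x, p x * f x < α + ε)
    (hsep : ∀ (k : Type) (_ : Fintype k) (_ : Nonempty k) (T : Set (k → ℝ)),
      Convex ℝ T → T.Nonempty → ∀ m : ℝ, (∀ d ∈ T, ∃ i, m ≤ d i) →
      ∃ q : k → ℝ, (∀ i, 0 ≤ q i) ∧ ∑ i, q i = 1 ∧ ∀ d ∈ T, m ≤ ∑ i, q i * d i) :
    ∃ f ∈ S, ∀ p ∈ Γ', ∑ x, p x * f x ≤ α := by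
  classical
  have hcont : ∀ p : Fin N → ℝ, Continuous fun f : Fin N → ℝ => ∑ x, p x * f x :=
    fun p => continuous_finset_sum _ fun x _ => continuous_const.mul (continuous_apply x)
  have key := hScomp.inter_iInter_nonempty (ι := ↥Γ')
    (fun p => {f : Fin N → ℝ | ∑ x, (p : Fin N → ℝ) x * f x ≤ α})
    (fun p => isClosed_le (hcont _) continuous_const) ?_
  · obtain ⟨f, hfS, hf⟩ := key
    exact ⟨f, hfS, fun p hp => Set.mem_iInter.1 hf ⟨p, hp⟩⟩
  · intro u
    rcases u.eq_empty_or_nonempty with rfl | hu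
    · simpa using hSne
    by_contra hcon
    rw [Set.not_nonempty_iff_eq_empty] at hcon
    have hstep : ∀ f ∈ S, ∃ p ∈ u, α < ∑ x, (p : Fin N → ℝ) x * f x := by
      intro f hf
      by_contra h
      push_neg at h
      have hmem : f ∈ S ∩ ⋂ p ∈ u, {f | ∑ x, (p : Fin N → ℝ) x * f x ≤ α} := by
        refine ⟨hf, ?_⟩
        simp only [Set.mem_iInter]
        exact fun p hp => h p hp
      rw [hcon] at hmem
      exact hmem
    set Φ : (Fin N → ℝ) → ℝ :=
      fun f => u.sup' hu (fun p => ∑ x, (p : Fin N → ℝ) x * f x) with hΦ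
    have hΦcont : Continuous Φ := by
      rw [continuous_iff_continuousAt]
      intro f
      exact ContinuousAt.finset_sup'_apply hu fun p _ => (hcont _).continuousAt
    obtain ⟨f₀, hf₀S, hf₀min⟩ := hScomp.exists_isMinOn hSne hΦcont.continuousOn
    set m := Φ f₀ with hm
    have hmα : α < m := by
      obtain ⟨p, hpu, hp⟩ := hstep f₀ hf₀S
      have h2 : ∑ x, (p : Fin N → ℝ) x * f₀ x ≤ Φ f₀ :=
        Finset.le_sup' (fun p : ↥Γ' => ∑ x, (p : Fin N → ℝ) x * f₀ x) hpu
      exact lt_of_lt_of_le hp h2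
    set A : (Fin N → ℝ) → (↥u → ℝ) :=
      fun f i => ∑ x, ((i : ↥Γ') : Fin N → ℝ) x * f x with hA
    set T : Set (↥u → ℝ) := A '' S with hT
    have hTconv : Convex ℝ T := by
      rintro _ ⟨f₁, hf₁, rfl⟩ _ ⟨f₂, hf₂, rfl⟩ a b ha hb hab
      refine ⟨a • f₁ + b • f₂, hSconv hf₁ hf₂ ha hb hab, ?_⟩
      funext i
      simp only [hA, Pi.add_apply, Pi.smul_apply, smul_eq_mul, Finset.mul_sum,
        ← Finset.sum_add_distrib]
      exact Finset.sum_congr rfl fun x _ => by ring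
    have hTne : T.Nonempty := hSne.image A
    haveI : Nonempty ↥u := ⟨⟨hu.choose, hu.choose_spec⟩⟩
    have hdisjT : ∀ d ∈ T, ∃ i, m ≤ d i := by
      rintro _ ⟨f, hf, rfl⟩
      obtain ⟨p, hpu, hp⟩ :=
        Finset.exists_mem_eq_sup' hu (fun p : ↥Γ' => ∑ x, (p : Fin N → ℝ) x * f x)
      refine ⟨⟨p, hpu⟩, ?_⟩
      have hle : m ≤ Φ f := hf₀min hf
      rw [hΦ] at hle
      simp only at hle
      rw [hp] at hle
      exact hle
    obtain ⟨q, hq0, hq1, hqT⟩ := hsep ↥u inferInstance inferInstance T hTconv hTne m hdisjT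
    set pbar : Fin N → ℝ := ∑ i : ↥u, q i • ((i : ↥Γ') : Fin N → ℝ) with hpbar
    have hpbarΓ : pbar ∈ Γ' :=
      hΓconv.sum_mem (fun i _ => hq0 i) hq1 (fun i _ => ((i : ↥Γ')).2)
    obtain ⟨f₁, hf₁S, hf₁lt⟩ := hα pbar hpbarΓ (m - α) (by linarith)
    have hge : m ≤ ∑ x, pbar x * f₁ x := by
      have h1 := hqT (A f₁) ⟨f₁, hf₁S, rfl⟩
      calc m ≤ ∑ i, q i * A f₁ i := h1
        _ = ∑ x, pbar x * f₁ x := by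
          simp only [hA, hpbar, Finset.sum_apply, Pi.smul_apply, smul_eq_mul,
            Finset.mul_sum, Finset.sum_mul]
          rw [Finset.sum_comm]
          exact Finset.sum_congr rfl fun x _ => Finset.sum_congr rfl fun i _ => by ring
    linarith


open Finset in
theorem stmt_18 {N : ℕ} {Z : Type*} [Nonempty Z] (ℓ : Fin N → Z → ℝ)
    (hbdd : ∃ M : ℝ, ∀ x ζ, |ℓ x ζ| ≤ M)
    (hSclosed : IsClosed {f : Fin N → ℝ | ∃ ζ : Z, f = fun x => ℓ x ζ})
    (hSconvex : Convex ℝ {f : Fin N → ℝ | ∃ ζ : Z, f = fun x => ℓ x ζ})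
    (Γ : Set (Fin N → ℝ)) (hΓne : Γ.Nonempty) (hΓconv : Convex ℝ Γ)
    (hΓsub : ∀ p ∈ Γ, (∀ x, 0 ≤ p x) ∧ ∑ x, p x = 1) :
    ∃ ζstar : Z,
      (⨆ p : Γ, ∑ x, (p : Fin N → ℝ) x * ℓ x ζstar)
        = (⨅ ζ : Z, ⨆ p : Γ, ∑ x, (p : Fin N → ℝ) x * ℓ x ζ) ∧
      (⨅ ζ : Z, ⨆ p : Γ, ∑ x, (p : Fin N → ℝ) x * ℓ x ζ)
        = (⨆ p : closure Γ, ⨅ ζ : Z, ∑ x, (p : Fin N → ℝ) x * ℓ x ζ) := by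
  classical
  obtain ⟨M₀, hM₀⟩ := hbdd
  set M := max M₀ 0 with hM
  have hℓM : ∀ x ζ, |ℓ x ζ| ≤ M := fun x ζ => (hM₀ x ζ).trans (le_max_left _ _)
  set S : Set (Fin N → ℝ) := {f | ∃ ζ : Z, f = fun x => ℓ x ζ} with hS
  have hSne : S.Nonempty := ⟨_, Classical.arbitrary Z, rfl⟩
  have hSsub : S ⊆ Set.Icc (fun _ => -M) (fun _ => M) := by
    rintro _ ⟨ζ, rfl⟩
    simp only [Set.mem_Icc, Pi.le_def]
    constructor <;> intro x
    · exact (abs_le.1 (hℓM x ζ)).1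
    · exact (abs_le.1 (hℓM x ζ)).2
  have hScomp : IsCompact S := IsCompact.of_isClosed_subset isCompact_Icc hSclosed hSsub
  set K : Set (Fin N → ℝ) := {p | (∀ x, 0 ≤ p x) ∧ ∑ x, p x = 1} with hK
  have hKclosed : IsClosed K := by
    have hKeq : K = (⋂ x, {p : Fin N → ℝ | 0 ≤ p x}) ∩ {p | ∑ x, p x = 1} := by
      ext p; simp [hK, Set.mem_iInter]
    rw [hKeq]
    exact (isClosed_iInter fun x =>
        isClosed_le continuous_const (continuous_apply x)).inter
      (isClosed_eq (continuous_finset_sum _ fun x _ => continuous_apply x) continuous_const)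
  set Γ' := closure Γ with hΓ'
  have hΓΓ' : Γ ⊆ Γ' := subset_closure
  have hΓ'sub : Γ' ⊆ K := closure_minimal (fun p hp => hΓsub p hp) hKclosed
  have hΓ'ne : Γ'.Nonempty := hΓne.closure
  have hΓ'conv : Convex ℝ Γ' := hΓconv.closure
  haveI := hΓne.to_subtype
  haveI := hΓ'ne.to_subtype
  have hbound : ∀ p ∈ K, ∀ ζ : Z, |∑ x, p x * ℓ x ζ| ≤ M := by
    intro p hp ζ
    calc |∑ x, p x * ℓ x ζ| ≤ ∑ x, |p x * ℓ x ζ| := Finset.abs_sum_le_sum_abs _ _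
      _ ≤ ∑ x, p x * M := Finset.sum_le_sum fun x _ => by
          rw [abs_mul, abs_of_nonneg (hp.1 x)]
          exact mul_le_mul_of_nonneg_left (hℓM x ζ) (hp.1 x)
      _ = M := by rw [← Finset.sum_mul, hp.2, one_mul]
  have hbddΓ : ∀ ζ : Z, BddAbove (Set.range fun p : Γ => ∑ x, (p : Fin N → ℝ) x * ℓ x ζ) :=
    fun ζ => ⟨M, by rintro _ ⟨p, rfl⟩; exact (abs_le.1 (hbound p (hΓsub p p.2) ζ)).2⟩
  have hbddG : ∀ f : Fin N → ℝ,
      BddAbove (Set.range fun p : Γ' => ∑ x, (p : Fin N → ℝ) x * f x) := by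
    intro f
    refine ⟨‖f‖, ?_⟩
    rintro _ ⟨p, rfl⟩
    have hpK := hΓ'sub p.2
    calc ∑ x, (p : Fin N → ℝ) x * f x ≤ ∑ x, (p : Fin N → ℝ) x * ‖f‖ :=
          Finset.sum_le_sum fun x _ => mul_le_mul_of_nonneg_left
            (le_trans (le_abs_self _) (norm_le_pi_norm f x)) (hpK.1 x)
      _ = ‖f‖ := by rw [← Finset.sum_mul, hpK.2, one_mul]
  -- sup over Γ equals sup over its closure
  have hgg' : ∀ ζ : Z, (⨆ p : Γ, ∑ x, (p : Fin N → ℝ) x * ℓ x ζ)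
      = ⨆ p : Γ', ∑ x, (p : Fin N → ℝ) x * ℓ x ζ := by
    intro ζ
    apply le_antisymm
    · exact ciSup_le fun p =>
        le_ciSup_of_le (hbddG (fun x => ℓ x ζ)) ⟨(p : Fin N → ℝ), hΓΓ' p.2⟩ le_rfl
    · apply ciSup_le
      intro p
      have hcl : IsClosed {r : Fin N → ℝ |
          ∑ x, r x * ℓ x ζ ≤ ⨆ p : Γ, ∑ x, (p : Fin N → ℝ) x * ℓ x ζ} :=
        isClosed_le (continuous_finset_sum _ fun x _ =>
          (continuous_apply x).mul continuous_const) continuous_const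
      have hsub2 : Γ ⊆ {r : Fin N → ℝ |
          ∑ x, r x * ℓ x ζ ≤ ⨆ p : Γ, ∑ x, (p : Fin N → ℝ) x * ℓ x ζ} :=
        fun r hr => le_ciSup (hbddΓ ζ) ⟨r, hr⟩
      exact closure_minimal hsub2 hcl p.2
  obtain ⟨p₀, hp₀⟩ := hΓne
  have hbddg : BddBelow (Set.range fun ζ : Z =>
      ⨆ p : Γ, ∑ x, (p : Fin N → ℝ) x * ℓ x ζ) := by
    refine ⟨-M, ?_⟩
    rintro _ ⟨ζ, rfl⟩
    refine le_trans ?_ (le_ciSup (hbddΓ ζ) ⟨p₀, hp₀⟩)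
    exact (abs_le.1 (hbound p₀ (hΓsub p₀ hp₀) ζ)).1
  -- the function G and its minimizer
  set G : (Fin N → ℝ) → ℝ := fun f => ⨆ p : Γ', ∑ x, (p : Fin N → ℝ) x * f x with hG
  have hGlip : ∀ f f' : Fin N → ℝ, G f ≤ G f' + dist f f' := by
    intro f f'
    apply ciSup_le
    intro p
    have hpK := hΓ'sub p.2
    have hterm : ∑ x, (p : Fin N → ℝ) x * f x
        ≤ (∑ x, (p : Fin N → ℝ) x * f' x) + dist f f' := by
      have hdiff : ∑ x, (p : Fin N → ℝ) x * f x - ∑ x, (p : Fin N → ℝ) x * f' x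
          = ∑ x, (p : Fin N → ℝ) x * (f x - f' x) := by
        rw [← Finset.sum_sub_distrib]
        exact Finset.sum_congr rfl fun x _ => by ring
      have hb : ∑ x, (p : Fin N → ℝ) x * (f x - f' x) ≤ dist f f' := by
        calc ∑ x, (p : Fin N → ℝ) x * (f x - f' x)
            ≤ ∑ x, (p : Fin N → ℝ) x * dist f f' := by
              refine Finset.sum_le_sum fun x _ => mul_le_mul_of_nonneg_left ?_ (hpK.1 x)
              refine le_trans (le_abs_self _) ?_
              rw [dist_eq_norm]
              exact norm_le_pi_norm (f - f') x
          _ = dist f f' := by rw [← Finset.sum_mul, hpK.2, one_mul]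
      linarith
    exact le_trans hterm (add_le_add (le_ciSup (hbddG f') p) le_rfl)
  have hGcont : Continuous G := by
    have hlip : LipschitzWith 1 G := by
      apply LipschitzWith.of_dist_le_mul
      intro f f'
      rw [Real.dist_eq, NNReal.coe_one, one_mul, abs_sub_le_iff]
      constructor
      · linarith [hGlip f f']
      · have h := hGlip f' f
        rw [dist_comm] at h
        linarith
    exact hlip.continuous
  obtain ⟨fstar, hfstarS, hmin⟩ := hScomp.exists_isMinOn hSne hGcont.continuousOn
  obtain ⟨ζstar, hζstar⟩ := hfstarS
  refine ⟨ζstar, ?_, ?_⟩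
  · -- minimax act
    apply le_antisymm
    · apply le_ciInf
      intro ζ
      rw [hgg' ζstar, hgg' ζ]
      show G (fun x => ℓ x ζstar) ≤ G (fun x => ℓ x ζ)
      rw [← hζstar]
      exact hmin ⟨ζ, rfl⟩
    · exact ciInf_le hbddg ζstar
  · -- minimax value
    have hbddh : ∀ p : Γ', BddBelow (Set.range fun ζ : Z => ∑ x, (p : Fin N → ℝ) x * ℓ x ζ) :=
      fun p => ⟨-M, by rintro _ ⟨ζ, rfl⟩; exact (abs_le.1 (hbound p (hΓ'sub p.2) ζ)).1⟩
    have hbddα : BddAbove (Set.range fun p : Γ' =>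
        ⨅ ζ : Z, ∑ x, (p : Fin N → ℝ) x * ℓ x ζ) := by
      refine ⟨M, ?_⟩
      rintro _ ⟨p, rfl⟩
      refine le_trans (ciInf_le (hbddh p) (Classical.arbitrary Z)) ?_
      exact (abs_le.1 (hbound p (hΓ'sub p.2) _)).2
    set α := ⨆ p : Γ', ⨅ ζ : Z, ∑ x, (p : Fin N → ℝ) x * ℓ x ζ with hα
    apply le_antisymm
    · -- inf sup ≤ sup inf, via core lemma
      have hcore := core_lemma S Γ' hScomp hSconvex hSne hΓ'conv α ?_ ?_
      · obtain ⟨f, hfS, hf⟩ := hcore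
        obtain ⟨ζ₀, rfl⟩ := hfS
        calc (⨅ ζ : Z, ⨆ p : Γ, ∑ x, (p : Fin N → ℝ) x * ℓ x ζ)
            ≤ ⨆ p : Γ, ∑ x, (p : Fin N → ℝ) x * ℓ x ζ₀ := ciInf_le hbddg ζ₀
          _ = ⨆ p : Γ', ∑ x, (p : Fin N → ℝ) x * ℓ x ζ₀ := hgg' ζ₀
          _ ≤ α := ciSup_le fun p => hf p p.2
      · intro p hp ε hε
        have h1 : (⨅ ζ : Z, ∑ x, p x * ℓ x ζ) ≤ α := le_ciSup hbddα ⟨p, hp⟩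
        have h2 : (⨅ ζ : Z, ∑ x, p x * ℓ x ζ) < α + ε := lt_of_le_of_lt h1 (by linarith)
        obtain ⟨ζ, hζ⟩ := exists_lt_of_ciInf_lt h2
        exact ⟨fun x => ℓ x ζ, ⟨ζ, rfl⟩, by simpa using hζ⟩
      · exact fun k fk nk T hT hTne m hd => @sep_lemma k fk nk T hT hTne m hd
    · -- sup inf ≤ inf sup
      apply ciSup_le
      intro p
      apply le_ciInf
      intro ζ
      refine le_trans (ciInf_le (hbddh p) ζ) ?_
      rw [hgg' ζ]
      exact le_ciSup (hbddG (fun x => ℓ x ζ)) p
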